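/- Let T ∈ M_{m,loc}(Z) and φ ∈ Lip(Z, Z') a Lipschitz map such that preimages of bounded sets are bounded. Then the push-forward φ_# T, defined by (φ_# T)(f,π) := T(f∘φ, π∘φ), satisfies ‖φ_# T‖(B) ≤ Lip(φ)^m · (φ_# ‖T‖)(B) for every Borel set B ⊂ Z', where φ_#‖T‖(B) = ‖T‖(φ^{-1}(B)). -/

import Mathlib

open Metric Filter MeasureTheory ENNReal Bornology Topology

variable {Z : Type*} [MetricSpace Z]

/-- Bounded-support Lipschitz real functions. -/
def LipBS {Z : Type*} [MetricSpace Z] (f : Z → ℝ) : Prop :=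
  (∃ K : NNReal, LipschitzWith K f) ∧ IsBounded (tsupport f)

/-- Functions Lipschitz on bounded subsets. -/
def LipLoc {Z : Type*} [MetricSpace Z] (f : Z → ℝ) : Prop :=
  ∀ s : Set Z, IsBounded s → ∃ K : NNReal, LipschitzOnWith K f s

/-- Multilinearity of a functional on `Lip_bs(Z) × Lip_loc(Z)^m`. -/
def IsMultilinearFunctional {Z : Type*} [MetricSpace Z] {m : ℕ}
    (T : (Z → ℝ) → (Fin m → Z → ℝ) → ℝ) : Prop :=
  (∀ f g π, LipBS f → LipBS g → (∀ i, LipLoc (π i)) →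
      T (f + g) π = T f π + T g π) ∧
  (∀ (c : ℝ) f π, LipBS f → (∀ i, LipLoc (π i)) → T (c • f) π = c * T f π) ∧
  (∀ f π (i : Fin m) (g g' : Z → ℝ), LipBS f → (∀ j, LipLoc (π j)) → LipLoc g → LipLoc g' →
      T f (Function.update π i (g + g')) =
        T f (Function.update π i g) + T f (Function.update π i g')) ∧
  (∀ f π (i : Fin m) (c : ℝ) (g : Z → ℝ), LipBS f → (∀ j, LipLoc (π j)) → LipLoc g →
      T f (Function.update π i (c • g)) = c * T f (Function.update π i g))

/-- Metric functional: multilinear, continuous and local (Definition 2.1). -/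
def IsMetricFunctional {Z : Type*} [MetricSpace Z] {m : ℕ}
    (T : (Z → ℝ) → (Fin m → Z → ℝ) → ℝ) : Prop :=
  IsMultilinearFunctional T ∧
  (∀ f (π : Fin m → Z → ℝ) (πj : ℕ → Fin m → Z → ℝ),
      LipBS f → (∀ i, LipLoc (π i)) → (∀ j i, LipLoc (πj j i)) →
      (∀ i z, Tendsto (fun j => πj j i z) atTop (𝓝 (π i z))) →
      (∀ s : Set Z, IsBounded s → ∃ K : NNReal, ∀ i j, LipschitzOnWith K (πj j i) s) →
      Tendsto (fun j => T f (πj j)) atTop (𝓝 (T f π))) ∧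
  (∀ f π, LipBS f → (∀ i, LipLoc (π i)) →
      (∃ i : Fin m, ∃ δ : ℝ, 0 < δ ∧ ∀ z w : Z,
        infDist z (tsupport f) ≤ δ → infDist w (tsupport f) ≤ δ → π i z = π i w) →
      T f π = 0)

/-- The mass of `T` in a set `V`. -/
noncomputable def massIn {Z : Type*} [MetricSpace Z] {m : ℕ}
    (T : (Z → ℝ) → (Fin m → Z → ℝ) → ℝ) (V : Set Z) : ℝ≥0∞ :=
  ⨆ p : {q : (n : ℕ) × (Fin n → (Z → ℝ) × (Fin m → Z → ℝ)) //
      (∀ i, LipBS (q.2 i).1 ∧ tsupport (q.2 i).1 ⊆ V ∧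
        ∀ k, LipschitzWith 1 ((q.2 i).2 k)) ∧
      (∀ z, (∑ i : Fin q.1, |(q.2 i).1 z|) ≤ 1)},
    ENNReal.ofReal (∑ i : Fin p.1.1, T ((p.1.2 i).1) ((p.1.2 i).2))

/-- The outer measure `‖T‖`. -/
noncomputable def normT {Z : Type*} [MetricSpace Z] {m : ℕ}
    (T : (Z → ℝ) → (Fin m → Z → ℝ) → ℝ) (A : Set Z) : ℝ≥0∞ :=
  ⨅ (V : Set Z) (_ : IsOpen V ∧ A ⊆ V), massIn T V

/-- Finite mass on bounded sets, concentrated near compact sets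
(membership condition for `M_{m,loc}(Z)`). -/
def MlocCond {Z : Type*} [MetricSpace Z] {m : ℕ}
    (T : (Z → ℝ) → (Fin m → Z → ℝ) → ℝ) : Prop :=
  ∀ U : Set Z, IsOpen U → IsBounded U → ∀ ε : ℝ, 0 < ε →
    ∃ C : Set Z, IsCompact C ∧ C ⊆ U ∧ massIn T U < ⊤ ∧
      massIn T (U \ C) < ENNReal.ofReal ε

section AuxLemmas

open Set Function
open scoped NNReal

variable {Z : Type*} [MetricSpace Z] {m : ℕ}
variable (T : (Z → ℝ) → (Fin m → Z → ℝ) → ℝ)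

lemma tsupport_zero'' : tsupport (0 : Z → ℝ) = ∅ := by
  simp [tsupport]

lemma lipbs_zero : LipBS (0 : Z → ℝ) :=
  ⟨⟨0, LipschitzWith.const 0⟩, by rw [tsupport_zero'']; exact Bornology.isBounded_empty⟩

lemma lipbs_add {f g : Z → ℝ} (hf : LipBS f) (hg : LipBS g) : LipBS (f + g) := by
  obtain ⟨⟨Kf, hKf⟩, hfb⟩ := hf
  obtain ⟨⟨Kg, hKg⟩, hgb⟩ := hg
  refine ⟨⟨Kf + Kg, hKf.add hKg⟩, ?_⟩
  refine (hfb.union hgb).subset ?_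
  refine (closure_mono (Function.support_add f g)).trans ?_
  rw [closure_union]
  exact le_rfl

lemma abs_min_sub_min_le' (c x y : ℝ) : |min c x - min c y| ≤ |x - y| := by
  rcases le_total c x with h1 | h1 <;> rcases le_total c y with h2 | h2 <;>
    simp only [min_eq_left, min_eq_right, h1, h2] <;> rw [abs_le] <;> constructor <;>
    cases abs_cases (x - y) <;> cases abs_cases (x - y) <;> linarith

lemma abs_max_sub_max_le' (c x y : ℝ) : |max c x - max c y| ≤ |x - y| := by
  rcases le_total c x with h1 | h1 <;> rcases le_total c y with h2 | h2 <;>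
    simp only [max_eq_left, max_eq_right, h1, h2] <;> rw [abs_le] <;> constructor <;>
    cases abs_cases (x - y) <;> cases abs_cases (x - y) <;> linarith

lemma lipschitzWith_mul1 {f g : Z → ℝ} {Kf Kg : ℝ≥0} (hf : LipschitzWith Kf f)
    (hg : LipschitzWith Kg g) (hfb : ∀ z, |f z| ≤ 1) (hgb : ∀ z, |g z| ≤ 1) :
    LipschitzWith (Kf + Kg) (fun z => f z * g z) := by
  apply LipschitzWith.of_dist_le_mul
  intro x y
  have h1 := hf.dist_le_mul x y
  have h2 := hg.dist_le_mul x y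
  rw [Real.dist_eq] at h1 h2 ⊢
  have e : f x * g x - f y * g y = f x * (g x - g y) + (f x - f y) * g y := by ring
  rw [e]
  push_cast
  have hd : (0:ℝ) ≤ dist x y := dist_nonneg
  calc |f x * (g x - g y) + (f x - f y) * g y|
      ≤ |f x * (g x - g y)| + |(f x - f y) * g y| := abs_add_le _ _
    _ = |f x| * |g x - g y| + |f x - f y| * |g y| := by rw [abs_mul, abs_mul]
    _ ≤ 1 * (Kg * dist x y) + (Kf * dist x y) * 1 := by
        refine add_le_add (mul_le_mul (hfb x) h2 (abs_nonneg _) zero_le_one)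
          (mul_le_mul h1 (hgb y) (abs_nonneg _) (by positivity))
    _ = (Kf + Kg) * dist x y := by ring

lemma lipbs_mul {f g : Z → ℝ} (hf : LipBS f) (hfb : ∀ z, |f z| ≤ 1)
    (hg : ∃ K : ℝ≥0, LipschitzWith K g) (hgb : ∀ z, |g z| ≤ 1) :
    LipBS (fun z => f z * g z) := by
  obtain ⟨⟨Kf, hKf⟩, hbf⟩ := hf
  obtain ⟨Kg, hKg⟩ := hg
  refine ⟨⟨Kf + Kg, lipschitzWith_mul1 hKf hKg hfb hgb⟩, ?_⟩
  refine hbf.subset (closure_minimal ?_ (isClosed_tsupport f))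
  intro z hz
  simp only [Function.mem_support] at hz
  refine subset_closure (Function.mem_support.2 fun h0 => hz ?_)
  rw [h0, zero_mul]

lemma tsupport_mul_left' {f g : Z → ℝ} : tsupport (fun z => f z * g z) ⊆ tsupport f := by
  refine closure_mono fun z hz => ?_
  simp only [Function.mem_support] at hz ⊢
  exact fun h0 => hz (by rw [h0, zero_mul])

lemma lip_cut {A : Set Z} {c a : ℝ} (hc : 0 ≤ c) :
    LipschitzWith c.toNNReal (fun z => min 1 (c * max 0 (infDist z A - a))) := by
  apply LipschitzWith.of_dist_le_mul
  intro x y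
  rw [Real.dist_eq]
  have hd : |infDist x A - infDist y A| ≤ dist x y := by
    have h := (lipschitz_infDist_pt A).dist_le_mul x y
    rwa [Real.dist_eq, NNReal.coe_one, one_mul] at h
  calc |min 1 (c * max 0 (infDist x A - a)) - min 1 (c * max 0 (infDist y A - a))|
      ≤ |c * max 0 (infDist x A - a) - c * max 0 (infDist y A - a)| :=
        abs_min_sub_min_le' _ _ _
    _ = c * |max 0 (infDist x A - a) - max 0 (infDist y A - a)| := by
        rw [← mul_sub, abs_mul, abs_of_nonneg hc]
    _ ≤ c * |(infDist x A - a) - (infDist y A - a)| :=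
        mul_le_mul_of_nonneg_left (abs_max_sub_max_le' _ _ _) hc
    _ = c * |infDist x A - infDist y A| := by rw [sub_sub_sub_cancel_right]
    _ ≤ c * dist x y := mul_le_mul_of_nonneg_left hd hc
    _ = ↑c.toNNReal * dist x y := by rw [Real.coe_toNNReal c hc]

lemma lipLoc_of_lipschitzWith {g : Z → ℝ} {K : ℝ≥0} (h : LipschitzWith K g) : LipLoc g :=
  fun _ _ => ⟨K, h.lipschitzOnWith⟩

lemma lipLoc_smul {g : Z → ℝ} (c : ℝ) (hg : LipLoc g) : LipLoc (c • g) := by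
  intro s hs
  obtain ⟨K, hK⟩ := hg s hs
  refine ⟨Real.nnabs c * K, ?_⟩
  rw [lipschitzOnWith_iff_dist_le_mul] at hK ⊢
  intro x hx y hy
  have h := hK x hx y hy
  calc dist ((c • g) x) ((c • g) y) = |c| * |g x - g y| := by
        simp only [Pi.smul_apply, smul_eq_mul, Real.dist_eq, ← mul_sub, abs_mul]
    _ ≤ |c| * (K * dist x y) := by
        rw [Real.dist_eq] at h
        exact mul_le_mul_of_nonneg_left h (abs_nonneg c)
    _ = ((Real.nnabs c * K : ℝ≥0) : ℝ) * dist x y := by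
        rw [NNReal.coe_mul, Real.coe_nnabs]; ring

variable {T}

lemma T_zero (hT : IsMetricFunctional T) {π : Fin m → Z → ℝ} (hπ : ∀ i, LipLoc (π i)) :
    T 0 π = 0 := by
  have h := hT.1.2.1 0 0 π lipbs_zero hπ
  rw [zero_smul, zero_mul] at h
  exact h

lemma lipbs_finset_sum {ι : Type*} (h : ι → Z → ℝ) (s : Finset ι) :
    (∀ i ∈ s, LipBS (h i)) → LipBS (∑ i ∈ s, h i) := by
  classical
  induction s using Finset.induction_on with
  | empty => intro _; simpa using lipbs_zero
  | insert _ _ ha ih =>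
      intro hh
      rw [Finset.sum_insert ha]
      exact lipbs_add (hh _ (Finset.mem_insert_self _ _))
        (ih fun i hi => hh i (Finset.mem_insert_of_mem hi))

lemma T_finset_sum (hT : IsMetricFunctional T) {ι : Type*} (h : ι → Z → ℝ)
    {π : Fin m → Z → ℝ} (hπ : ∀ i, LipLoc (π i)) (s : Finset ι) :
    (∀ i ∈ s, LipBS (h i)) → T (∑ i ∈ s, h i) π = ∑ i ∈ s, T (h i) π := by
  classical
  induction s using Finset.induction_on with
  | empty => intro _; simpa using T_zero hT hπ
  | insert _ _ ha ih =>
      intro hh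
      rw [Finset.sum_insert ha, Finset.sum_insert ha,
        hT.1.1 _ _ π (hh _ (Finset.mem_insert_self _ _))
          (lipbs_finset_sum _ _ fun i hi => hh i (Finset.mem_insert_of_mem hi)) hπ,
        ih fun i hi => hh i (Finset.mem_insert_of_mem hi)]

variable (T)

lemma le_massIn {V : Set Z} {n : ℕ} (F : Fin n → (Z → ℝ) × (Fin m → Z → ℝ))
    (h1 : ∀ i, LipBS (F i).1 ∧ tsupport (F i).1 ⊆ V ∧ ∀ k, LipschitzWith 1 ((F i).2 k))
    (h2 : ∀ z, (∑ i : Fin n, |(F i).1 z|) ≤ 1) :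
    ENNReal.ofReal (∑ i : Fin n, T (F i).1 (F i).2) ≤ massIn T V :=
  le_iSup (fun p : {q : (n : ℕ) × (Fin n → (Z → ℝ) × (Fin m → Z → ℝ)) //
      (∀ i, LipBS (q.2 i).1 ∧ tsupport (q.2 i).1 ⊆ V ∧
        ∀ k, LipschitzWith 1 ((q.2 i).2 k)) ∧
      (∀ z, (∑ i : Fin q.1, |(q.2 i).1 z|) ≤ 1)} =>
    ENNReal.ofReal (∑ i : Fin p.1.1, T ((p.1.2 i).1) ((p.1.2 i).2))) ⟨⟨n, F⟩, h1, h2⟩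

lemma massIn_mono {V W : Set Z} (h : V ⊆ W) : massIn T V ≤ massIn T W := by
  refine iSup_le fun p => ?_
  obtain ⟨⟨n, F⟩, h1, h2⟩ := p
  exact le_massIn T F (fun i => ⟨(h1 i).1, (h1 i).2.1.trans h, (h1 i).2.2⟩) h2

variable {T}

lemma massIn_empty (hT : IsMetricFunctional T) : massIn T (∅ : Set Z) = 0 := by
  refine le_antisymm (iSup_le fun p => ?_) (zero_le)
  obtain ⟨⟨n, F⟩, h1, h2⟩ := p
  have hz : ∀ i : Fin n, T (F i).1 (F i).2 = 0 := by
    intro i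
    have hsupp := (h1 i).2.1
    have hF0 : (F i).1 = 0 := by
      funext z
      by_contra hzz
      exact (hsupp (subset_closure (Function.mem_support.2 hzz))).elim
    rw [hF0]
    exact T_zero hT fun k => lipLoc_of_lipschitzWith ((h1 i).2.2 k)
  simp only [hz, Finset.sum_const_zero, ENNReal.ofReal_zero, le_refl]

variable (T)

lemma normT_le_massIn {A V : Set Z} (hV : IsOpen V) (hAV : A ⊆ V) :
    normT T A ≤ massIn T V :=
  iInf_le_of_le V (iInf_le_of_le ⟨hV, hAV⟩ le_rfl)

lemma normT_isOpen {V : Set Z} (hV : IsOpen V) : normT T V = massIn T V :=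
  le_antisymm (normT_le_massIn T hV Subset.rfl)
    (le_iInf fun _ => le_iInf fun hW => massIn_mono T hW.2)

lemma normT_mono {A B : Set Z} (h : A ⊆ B) : normT T A ≤ normT T B :=
  le_iInf fun _ => le_iInf fun hV => normT_le_massIn T hV.1 (h.trans hV.2)

variable {T}

lemma normT_empty (hT : IsMetricFunctional T) : normT T (∅ : Set Z) = 0 :=
  le_antisymm (by
    have h := normT_le_massIn T (isOpen_empty (X := Z)) (Subset.refl ∅)
    rwa [massIn_empty hT] at h) (zero_le)

lemma exists_isOpen_massIn_lt {A : Set Z} {x : ℝ≥0∞} (h : normT T A < x) :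
    ∃ V, IsOpen V ∧ A ⊆ V ∧ massIn T V < x := by
  rw [normT] at h
  simp only [iInf_lt_iff, exists_prop] at h
  obtain ⟨V, ⟨hVo, hAV⟩, hlt⟩ := h
  exact ⟨V, hVo, hAV, hlt⟩

lemma ofReal_finset_sum_le {ι : Type*} (s : Finset ι) (f : ι → ℝ) :
    ENNReal.ofReal (∑ i ∈ s, f i) ≤ ∑ i ∈ s, ENNReal.ofReal (f i) := by
  classical
  induction s using Finset.induction_on with
  | empty => simp
  | insert _ _ ha ih =>
      rw [Finset.sum_insert ha, Finset.sum_insert ha]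
      exact le_trans ENNReal.ofReal_add_le (add_le_add_right ih _)

end AuxLemmas
section AuxLemmas2

open Set Function
open scoped NNReal

variable {Z : Type*} [MetricSpace Z] {m : ℕ}
variable {T : (Z → ℝ) → (Fin m → Z → ℝ) → ℝ}

lemma massIn_iUnion_le (hT : IsMetricFunctional T) (hTloc : MlocCond T)
    (V : ℕ → Set Z) (hVo : ∀ i, IsOpen (V i)) :
    massIn T (⋃ i, V i) ≤ ∑' i, massIn T (V i) := by
  classical
  by_cases huniv : ∃ i, V i = univ
  · obtain ⟨i, hi⟩ := huniv
    refine (massIn_mono T ?_).trans (ENNReal.le_tsum i)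
    rw [hi]; exact Set.subset_univ _
  push_neg at huniv
  have hVc : ∀ i, ((V i)ᶜ).Nonempty := fun i => Set.nonempty_compl.2 (huniv i)
  refine iSup_le fun p => ?_
  obtain ⟨⟨n, F⟩, hadm, hb⟩ := p
  apply ENNReal.le_of_forall_pos_le_add
  intro ε hε _
  -- the union of the supports
  set K : Set Z := ⋃ j : Fin n, tsupport (F j).1 with hK
  have hKclosed : IsClosed K := isClosed_iUnion_of_finite fun j => isClosed_tsupport _
  have hKbdd : IsBounded K := isBounded_iUnion.2 fun j => (hadm j).1.2
  have hKV : K ⊆ ⋃ i, V i := Set.iUnion_subset fun j => (hadm j).2.1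
  set U : Set Z := Metric.thickening 1 K with hU
  have hUo : IsOpen U := Metric.isOpen_thickening
  have hUb : IsBounded U := hKbdd.thickening
  have hKU : K ⊆ U := Metric.self_subset_thickening one_pos K
  obtain ⟨C, hCcpt, hCU, hUfin, hCsmall⟩ := hTloc U hUo hUb (ε : ℝ) (by exact_mod_cast hε)
  set C' : Set Z := C ∩ K with hC'
  have hC'cpt : IsCompact C' := hCcpt.inter_right hKclosed
  have hC'sub : C' ⊆ ⋃ i, V i := fun z hz => hKV hz.2
  -- a finite subcover of C'
  obtain ⟨s, hscover⟩ := hC'cpt.elim_finite_subcover V hVo hC'sub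
  -- Lebesgue number for the finite subcover
  obtain ⟨r, hr, hrball⟩ := lebesgue_number_lemma_of_metric hC'cpt
    (fun i : ↥s => hVo i) (fun x hx => by
      have := hscover hx
      simp only [Set.mem_iUnion, exists_prop] at this
      obtain ⟨i, his, hxi⟩ := this
      exact Set.mem_iUnion.2 ⟨⟨i, his⟩, hxi⟩)
  set r3 : ℝ := r / 3 with hr3
  have hr3pos : 0 < r3 := by positivity
  -- enumeration of the finite subcover
  set e : Fin s.card → ℕ := fun k => ((s.orderIsoOfFin rfl k : ↥s) : ℕ) with he
  have hes : ∀ k, e k ∈ s := fun k => (s.orderIsoOfFin rfl k).2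
  have hesurj : ∀ i ∈ s, ∃ k, e k = i := fun i hi =>
    ⟨(s.orderIsoOfFin rfl).symm ⟨i, hi⟩, by rw [he]; exact congrArg Subtype.val ((s.orderIsoOfFin rfl).apply_symm_apply ⟨i, hi⟩)⟩
  have heinj : Function.Injective e := fun a b hab =>
    (s.orderIsoOfFin rfl).injective (Subtype.ext hab)
  set E : ℕ → ℕ := fun k => if h : k < s.card then e ⟨k, h⟩ else 0 with hE
  -- the cut-off functions
  set gg : ℕ → Z → ℝ := fun i z => min 1 (r3⁻¹ * max 0 (infDist z ((V i)ᶜ) - r3)) with hgg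
  have hgg0 : ∀ i z, 0 ≤ gg i z := fun i z => le_min zero_le_one (by positivity)
  have hgg1 : ∀ i z, gg i z ≤ 1 := fun i z => min_le_left _ _
  have hgglip : ∀ i, ∃ Kg : ℝ≥0, LipschitzWith Kg (gg i) :=
    fun i => ⟨_, lip_cut (le_of_lt (inv_pos.2 hr3pos))⟩
  have hggsupp : ∀ i, tsupport (gg i) ⊆ {z | r3 ≤ infDist z ((V i)ᶜ)} := by
    intro i
    refine closure_minimal ?_ (isClosed_le continuous_const (continuous_infDist_pt _))
    intro z hz
    simp only [Function.mem_support] at hz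
    by_contra hlt
    simp only [Set.mem_setOf_eq, not_le] at hlt
    apply hz
    have hm0 : max 0 (infDist z ((V i)ᶜ) - r3) = 0 := max_eq_left (by linarith)
    simp [hgg, hm0]
  have hggV : ∀ i, {z | r3 ≤ infDist z ((V i)ᶜ)} ⊆ V i := by
    intro i z hz
    by_contra hzv
    have h0 : infDist z ((V i)ᶜ) = 0 := Metric.infDist_zero_of_mem hzv
    rw [Set.mem_setOf_eq, h0] at hz
    linarith
  have hggone : ∀ i z, 2 * r3 ≤ infDist z ((V i)ᶜ) → gg i z = 1 := by
    intro i z hz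
    have h2 : r3 ≤ max 0 (infDist z ((V i)ᶜ) - r3) := le_max_of_le_right (by linarith)
    have h1 : (1 : ℝ) ≤ r3⁻¹ * max 0 (infDist z ((V i)ᶜ) - r3) := by
      calc (1:ℝ) = r3⁻¹ * r3 := by field_simp
        _ ≤ _ := mul_le_mul_of_nonneg_left h2 (by positivity)
    simp [hgg, min_eq_left h1]
  set G : ℕ → Z → ℝ := fun k => gg (E k) with hG
  set P : ℕ → Z → ℝ := fun k z => ∏ l ∈ Finset.range k, (1 - G l z) with hP
  have hPnonneg : ∀ k z, 0 ≤ P k z := fun k z =>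
    Finset.prod_nonneg fun l _ => by have := hgg1 (E l) z; simp only [hG]; linarith
  have hPle1 : ∀ k z, P k z ≤ 1 := fun k z =>
    Finset.prod_le_one (fun l _ => by have := hgg1 (E l) z; simp only [hG]; linarith)
      (fun l _ => by have := hgg0 (E l) z; simp only [hG]; linarith)
  have hfaclip : ∀ k, ∃ Kg : ℝ≥0, LipschitzWith Kg (fun z => 1 - G k z) := by
    intro k
    obtain ⟨Kg, hKg⟩ := hgglip (E k)
    refine ⟨Kg, LipschitzWith.of_dist_le_mul fun x y => ?_⟩
    have h := hKg.dist_le_mul x y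
    rw [Real.dist_eq] at h ⊢
    calc |1 - G k x - (1 - G k y)| = |gg (E k) y - gg (E k) x| := by
          rw [hG]; ring_nf
      _ ≤ ↑Kg * dist x y := by rw [← Real.dist_eq, dist_comm]; exact h
  have hPlip : ∀ k, ∃ Kp : ℝ≥0, LipschitzWith Kp (P k) := by
    intro k
    induction k with
    | zero =>
        refine ⟨0, ?_⟩
        have h1 : P 0 = fun _ => (1:ℝ) := by funext z; simp [hP]
        rw [h1]; exact LipschitzWith.const 1
    | succ k ih =>
        obtain ⟨Kp, hKp⟩ := ih
        obtain ⟨Kg, hKg⟩ := hfaclip k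
        have h1 : P (k+1) = fun z => P k z * (1 - G k z) := by
          funext z; simp [hP, Finset.prod_range_succ]
        rw [h1]
        exact ⟨Kp + Kg, lipschitzWith_mul1 hKp hKg
          (fun z => abs_le.2 ⟨by linarith [hPnonneg k z], hPle1 k z⟩)
          (fun z => abs_le.2 ⟨by linarith [hgg1 (E k) z],
            by have := hgg0 (E k) z; simp only [hG]; linarith⟩)⟩
  have htel : ∀ (k : ℕ) (z : Z),
      (∑ l ∈ Finset.range k, G l z * P l z) = 1 - P k z := by
    intro k z
    induction k with
    | zero => simp [hP]
    | succ k ih =>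
        rw [Finset.sum_range_succ, ih]
        have h1 : P (k+1) z = P k z * (1 - G k z) := by
          simp [hP, Finset.prod_range_succ]
        rw [h1]; ring
  -- the bad set where the partition does not sum to one
  set N : Set Z := ⋃ k : Fin s.card, {z | 2 * r3 < infDist z ((V (E (k:ℕ)))ᶜ)} with hN
  have hNopen : IsOpen N :=
    isOpen_iUnion fun k => isOpen_lt continuous_const (continuous_infDist_pt _)
  have hC'N : C' ⊆ N := by
    intro x hx
    obtain ⟨⟨i, his⟩, hball⟩ := hrball x hx
    obtain ⟨k, hk⟩ := hesurj i his
    have hge : r ≤ infDist x ((V i)ᶜ) := by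
      rw [Metric.infDist_eq_iInf]
      have hne : Nonempty ↥((V i)ᶜ) := (hVc i).to_subtype
      refine le_ciInf fun y => ?_
      by_contra hlt
      push_neg at hlt
      exact y.2 (hball (Metric.mem_ball.2 (by rw [dist_comm]; exact hlt)))
    have hEk : E (k:ℕ) = i := by rw [hE]; simp only [dif_pos k.isLt]; rw [← hk]
    refine Set.mem_iUnion.2 ⟨k, ?_⟩
    simp only [Set.mem_setOf_eq, hEk]
    have : 2 * r3 < r := by rw [hr3]; linarith
    linarith
  have hρN : ∀ z ∈ N, P s.card z = 0 := by
    intro z hz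
    obtain ⟨k, hk⟩ := Set.mem_iUnion.1 hz
    have h1 : G (k:ℕ) z = 1 := hggone (E (k:ℕ)) z (le_of_lt hk)
    refine Finset.prod_eq_zero (Finset.mem_range.2 k.isLt) ?_
    rw [h1]; ring
  -- bound on each f_j
  have hfb : ∀ (j : Fin n) (z : Z), |(F j).1 z| ≤ 1 := by
    intro j z
    calc |(F j).1 z| ≤ ∑ i : Fin n, |(F i).1 z| :=
          Finset.single_le_sum (f := fun i : Fin n => |(F i).1 z|)
            (fun i _ => abs_nonneg _) (Finset.mem_univ j)
      _ ≤ 1 := hb z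
  -- properties of the pieces
  have hσb : ∀ k z, |G k z * P k z| ≤ 1 := by
    intro k z
    rw [abs_mul]
    have h1 := hgg0 (E k) z; have h2 := hgg1 (E k) z
    have h3 := hPnonneg k z; have h4 := hPle1 k z
    rw [abs_of_nonneg h1, abs_of_nonneg h3]
    exact mul_le_one₀ h2 h3 h4
  have hσlip : ∀ k, ∃ Kσ : ℝ≥0, LipschitzWith Kσ (fun z => G k z * P k z) := by
    intro k
    obtain ⟨K1, h1⟩ := hgglip (E k)
    obtain ⟨K2, h2⟩ := hPlip k
    exact ⟨K1 + K2, lipschitzWith_mul1 h1 h2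
      (fun z => abs_le.2 ⟨by linarith [hgg0 (E k) z], hgg1 (E k) z⟩)
      (fun z => abs_le.2 ⟨by linarith [hPnonneg k z], hPle1 k z⟩)⟩
  have hρb : ∀ z, |P s.card z| ≤ 1 := fun z =>
    abs_le.2 ⟨by linarith [hPnonneg s.card z], hPle1 s.card z⟩
  have hlipσpiece : ∀ (j : Fin n) (k : ℕ),
      LipBS (fun z => (F j).1 z * (G k z * P k z)) := fun j k =>
    lipbs_mul (hadm j).1 (hfb j) (hσlip k) (hσb k)
  have hlipρpiece : ∀ j : Fin n, LipBS (fun z => (F j).1 z * P s.card z) := fun j =>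
    lipbs_mul (hadm j).1 (hfb j) (hPlip s.card) hρb
  have hπloc : ∀ j : Fin n, ∀ i, LipLoc ((F j).2 i) := fun j i =>
    lipLoc_of_lipschitzWith ((hadm j).2.2 i)
  -- support of the σ pieces
  have hsuppσ : ∀ (j : Fin n) (k : ℕ),
      tsupport (fun z => (F j).1 z * (G k z * P k z)) ⊆ V (E k) := by
    intro j k
    refine (closure_minimal ?_ (isClosed_le continuous_const
      (continuous_infDist_pt _))).trans (hggV (E k))
    intro z hz
    simp only [Function.mem_support] at hz
    have hGz : G k z ≠ 0 := by
      intro h0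
      exact hz (by rw [hG] at h0 ⊢; rw [h0]; ring)
    exact hggsupp (E k) (subset_closure (Function.mem_support.2 hGz))
  -- decomposition of each T value
  have hdecomp : ∀ j : Fin n, T (F j).1 (F j).2 =
      (∑ k ∈ Finset.range s.card,
        T (fun z => (F j).1 z * (G k z * P k z)) (F j).2)
        + T (fun z => (F j).1 z * P s.card z) (F j).2 := by
    intro j
    have hfeq : (F j).1 =
        (∑ k ∈ Finset.range s.card, fun z => (F j).1 z * (G k z * P k z))
          + (fun z => (F j).1 z * P s.card z) := by
      funext z
      simp only [Finset.sum_apply, Pi.add_apply]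
      have h1 : (∑ k ∈ Finset.range s.card, (F j).1 z * (G k z * P k z))
          = (F j).1 z * (∑ k ∈ Finset.range s.card, G k z * P k z) := by
        rw [Finset.mul_sum]
      rw [h1, htel s.card z]; ring
    calc T (F j).1 (F j).2
        = T ((∑ k ∈ Finset.range s.card, fun z => (F j).1 z * (G k z * P k z))
            + (fun z => (F j).1 z * P s.card z)) (F j).2 := by rw [← hfeq]
      _ = T (∑ k ∈ Finset.range s.card, fun z => (F j).1 z * (G k z * P k z)) (F j).2
            + T (fun z => (F j).1 z * P s.card z) (F j).2 := by
          exact hT.1.1 _ _ (F j).2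
            (lipbs_finset_sum _ _ fun k _ => hlipσpiece j k) (hlipρpiece j) (hπloc j)
      _ = _ := by
          rw [T_finset_sum hT _ (hπloc j) _ fun k _ => hlipσpiece j k]
  -- mass bound for each σ tuple
  have hklemass : ∀ k ∈ Finset.range s.card,
      ENNReal.ofReal (∑ j : Fin n, T (fun z => (F j).1 z * (G k z * P k z)) (F j).2)
        ≤ massIn T (V (E k)) := by
    intro k _
    refine le_massIn T (fun j => (fun z => (F j).1 z * (G k z * P k z), (F j).2))
      (fun j => ⟨hlipσpiece j k, hsuppσ j k, (hadm j).2.2⟩) (fun z => ?_)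
    have h1 : ∀ j : Fin n, |(F j).1 z * (G k z * P k z)| = |(F j).1 z| * |G k z * P k z| :=
      fun j => abs_mul _ _
    simp only [h1]
    rw [← Finset.sum_mul]
    exact mul_le_one₀ (hb z) (abs_nonneg _) (hσb k z)
  -- mass bound for the ρ tuple
  have hρmass : ENNReal.ofReal
      (∑ j : Fin n, T (fun z => (F j).1 z * P s.card z) (F j).2) ≤ massIn T (U \ C) := by
    refine le_massIn T (fun j => (fun z => (F j).1 z * P s.card z, (F j).2))
      (fun j => ⟨hlipρpiece j, ?_, (hadm j).2.2⟩) (fun z => ?_)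
    · have h1 : tsupport (fun z => (F j).1 z * P s.card z) ⊆ tsupport (F j).1 :=
        tsupport_mul_left'
      have h2 : tsupport (fun z => (F j).1 z * P s.card z) ⊆ Nᶜ := by
        refine closure_minimal ?_ hNopen.isClosed_compl
        intro z hz
        simp only [Function.mem_support] at hz
        intro hzN
        exact hz (by rw [hρN z hzN]; ring)
      intro z hz
      refine ⟨hKU (Set.mem_iUnion.2 ⟨j, h1 hz⟩), fun hzC => ?_⟩
      exact (h2 hz) (hC'N ⟨hzC, Set.mem_iUnion.2 ⟨j, h1 hz⟩⟩)
    · have h1 : ∀ j : Fin n, |(F j).1 z * P s.card z| = |(F j).1 z| * |P s.card z| :=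
        fun j => abs_mul _ _
      simp only [h1]
      rw [← Finset.sum_mul]
      exact mul_le_one₀ (hb z) (abs_nonneg _) (hρb z)
  -- put everything together
  have hEinj : ∀ a ∈ Finset.range s.card, ∀ b ∈ Finset.range s.card, E a = E b → a = b := by
    intro a ha b hb' hab
    rw [Finset.mem_range] at ha hb'
    rw [hE] at hab
    simp only [dif_pos ha, dif_pos hb'] at hab
    have := heinj hab
    exact Fin.mk.inj_iff.1 this
  calc ENNReal.ofReal (∑ j : Fin n, T (F j).1 (F j).2)
      = ENNReal.ofReal ((∑ k ∈ Finset.range s.card,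
          ∑ j : Fin n, T (fun z => (F j).1 z * (G k z * P k z)) (F j).2)
          + ∑ j : Fin n, T (fun z => (F j).1 z * P s.card z) (F j).2) := by
        congr 1
        rw [Finset.sum_congr rfl fun j _ => hdecomp j, Finset.sum_add_distrib,
          Finset.sum_comm]
    _ ≤ ENNReal.ofReal (∑ k ∈ Finset.range s.card,
          ∑ j : Fin n, T (fun z => (F j).1 z * (G k z * P k z)) (F j).2)
          + ENNReal.ofReal (∑ j : Fin n, T (fun z => (F j).1 z * P s.card z) (F j).2) :=
        ENNReal.ofReal_add_le
    _ ≤ (∑ k ∈ Finset.range s.card, ENNReal.ofReal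
          (∑ j : Fin n, T (fun z => (F j).1 z * (G k z * P k z)) (F j).2))
          + ENNReal.ofReal (∑ j : Fin n, T (fun z => (F j).1 z * P s.card z) (F j).2) :=
        add_le_add_left (ofReal_finset_sum_le _ _) _
    _ ≤ (∑ k ∈ Finset.range s.card, massIn T (V (E k))) + massIn T (U \ C) :=
        add_le_add (Finset.sum_le_sum hklemass) hρmass
    _ ≤ (∑' i, massIn T (V i)) + ↑ε := by
        refine add_le_add ?_ ?_
        · rw [← Finset.sum_image (g := E) (f := fun i => massIn T (V i)) hEinj]
          exact ENNReal.sum_le_tsum _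
        · refine le_trans (le_of_lt hCsmall) ?_
          rw [ENNReal.ofReal_coe_nnreal]

end AuxLemmas2
section AuxLemmas3

open Set Function
open scoped NNReal

variable {Z : Type*} [MetricSpace Z] {m : ℕ}
variable {T : (Z → ℝ) → (Fin m → Z → ℝ) → ℝ}

lemma normT_iUnion_le (hT : IsMetricFunctional T) (hTloc : MlocCond T) (A : ℕ → Set Z) :
    normT T (⋃ i, A i) ≤ ∑' i, normT T (A i) := by
  by_cases htop : ∃ i, normT T (A i) = ⊤
  · obtain ⟨i, hi⟩ := htop
    rw [show (∑' i, normT T (A i)) = ⊤ from top_unique (hi ▸ ENNReal.le_tsum i)]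
    exact le_top
  push_neg at htop
  apply ENNReal.le_of_forall_pos_le_add
  intro ε hε _
  obtain ⟨δ, hδpos, hδsum⟩ := ENNReal.exists_pos_sum_of_countable'
    (show (ε : ℝ≥0∞) ≠ 0 by exact_mod_cast hε.ne') ℕ
  have hchoice : ∀ i, ∃ Vi, IsOpen Vi ∧ A i ⊆ Vi ∧ massIn T Vi < normT T (A i) + δ i := by
    intro i
    exact exists_isOpen_massIn_lt (ENNReal.lt_add_right (htop i) (hδpos i).ne')
  choose Vf hVfo hAV hVm using hchoice
  calc normT T (⋃ i, A i) ≤ massIn T (⋃ i, Vf i) :=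
        normT_le_massIn T (isOpen_iUnion hVfo) (Set.iUnion_mono hAV)
    _ ≤ ∑' i, massIn T (Vf i) := massIn_iUnion_le hT hTloc Vf hVfo
    _ ≤ ∑' i, (normT T (A i) + δ i) := ENNReal.tsum_le_tsum fun i => (hVm i).le
    _ = (∑' i, normT T (A i)) + ∑' i, δ i := ENNReal.tsum_add
    _ ≤ (∑' i, normT T (A i)) + ↑ε := add_le_add_right hδsum.le _

lemma massIn_union_le (hT : IsMetricFunctional T) (hTloc : MlocCond T) {V W : Set Z}
    (hV : IsOpen V) (hW : IsOpen W) :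
    massIn T (V ∪ W) ≤ massIn T V + massIn T W := by
  classical
  have h := massIn_iUnion_le hT hTloc
    (fun n => if n = 0 then V else if n = 1 then W else ∅)
    (fun n => by
      by_cases h0 : n = 0
      · simp [h0, hV]
      by_cases h1 : n = 1
      · simp [h0, h1, hW]
      simp [h0, h1])
  have h1 : (⋃ n, if n = 0 then V else if n = 1 then W else (∅ : Set Z)) = V ∪ W := by
    apply Set.Subset.antisymm
    · refine Set.iUnion_subset fun n => ?_
      by_cases h0 : n = 0
      · simp [h0]
      by_cases h1 : n = 1
      · simp [h0, h1]
      simp [h0, h1]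
    · rintro z (hz | hz)
      · exact Set.mem_iUnion.2 ⟨0, by simpa using hz⟩
      · exact Set.mem_iUnion.2 ⟨1, by simpa using hz⟩
  have h2 : (∑' n : ℕ, massIn T (if n = 0 then V else if n = 1 then W else ∅))
      = massIn T V + massIn T W := by
    rw [tsum_eq_sum (s := {0, 1}) ?_]
    · rw [Finset.sum_pair (by norm_num : (0:ℕ) ≠ 1)]
      norm_num
    · intro n hn
      simp only [Finset.mem_insert, Finset.mem_singleton] at hn
      push_neg at hn
      simp only [if_neg hn.1, if_neg hn.2]
      exact massIn_empty hT
  rw [h1, h2] at h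
  exact h

lemma massIn_add_le_of_disjoint (T : (Z → ℝ) → (Fin m → Z → ℝ) → ℝ) {V₁ V₂ W : Set Z}
    (h1 : V₁ ⊆ W) (h2 : V₂ ⊆ W) (hd : Disjoint V₁ V₂) :
    massIn T V₁ + massIn T V₂ ≤ massIn T W := by
  have hne : ∀ V : Set Z, Nonempty {q : (n : ℕ) × (Fin n → (Z → ℝ) × (Fin m → Z → ℝ)) //
      (∀ i, LipBS (q.2 i).1 ∧ tsupport (q.2 i).1 ⊆ V ∧
        ∀ k, LipschitzWith 1 ((q.2 i).2 k)) ∧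
      (∀ z, (∑ i : Fin q.1, |(q.2 i).1 z|) ≤ 1)} := by
    intro V
    exact ⟨⟨⟨0, Fin.elim0⟩, fun i => i.elim0, fun z => by simp⟩⟩
  haveI := hne V₁
  haveI := hne V₂
  refine ENNReal.iSup_add_iSup_le fun p q => ?_
  obtain ⟨⟨n₁, F₁⟩, ha1, hb1⟩ := p
  obtain ⟨⟨n₂, F₂⟩, ha2, hb2⟩ := q
  by_cases hS1 : (∑ i : Fin n₁, T (F₁ i).1 (F₁ i).2) ≤ 0
  · rw [ENNReal.ofReal_eq_zero.2 hS1, zero_add]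
    exact le_massIn T F₂ (fun i => ⟨(ha2 i).1, (ha2 i).2.1.trans h2, (ha2 i).2.2⟩) hb2
  by_cases hS2 : (∑ i : Fin n₂, T (F₂ i).1 (F₂ i).2) ≤ 0
  · rw [ENNReal.ofReal_eq_zero.2 hS2, add_zero]
    exact le_massIn T F₁ (fun i => ⟨(ha1 i).1, (ha1 i).2.1.trans h1, (ha1 i).2.2⟩) hb1
  push_neg at hS1 hS2
  rw [← ENNReal.ofReal_add hS1.le hS2.le]
  refine le_trans (le_of_eq ?_) (le_massIn T (V := W) (Fin.append F₁ F₂) ?_ ?_)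
  · congr 1
    rw [Fin.sum_univ_add]
    congr 1
    · exact Finset.sum_congr rfl fun i _ => by rw [Fin.append_left]
    · exact Finset.sum_congr rfl fun i _ => by rw [Fin.append_right]
  · refine Fin.addCases ?_ ?_
    · intro i
      rw [Fin.append_left]
      exact ⟨(ha1 i).1, (ha1 i).2.1.trans h1, (ha1 i).2.2⟩
    · intro i
      rw [Fin.append_right]
      exact ⟨(ha2 i).1, (ha2 i).2.1.trans h2, (ha2 i).2.2⟩
  · intro z
    rw [Fin.sum_univ_add]
    have e1 : ∀ i : Fin n₁, |(Fin.append F₁ F₂ (Fin.castAdd n₂ i)).1 z| = |(F₁ i).1 z| :=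
      fun i => by rw [Fin.append_left]
    have e2 : ∀ i : Fin n₂, |(Fin.append F₁ F₂ (Fin.natAdd n₁ i)).1 z| = |(F₂ i).1 z| :=
      fun i => by rw [Fin.append_right]
    simp only [e1, e2]
    by_cases hz : ∀ j : Fin n₁, (F₁ j).1 z = 0
    · have hzz : (∑ j : Fin n₁, |(F₁ j).1 z|) = 0 :=
        Finset.sum_eq_zero fun j _ => by rw [hz j, abs_zero]
      rw [hzz, zero_add]
      exact hb2 z
    · push_neg at hz
      obtain ⟨j0, hj0⟩ := hz
      have hzV1 : z ∈ V₁ := (ha1 j0).2.1 (subset_closure (Function.mem_support.2 hj0))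
      have hz2 : ∀ j : Fin n₂, (F₂ j).1 z = 0 := by
        intro j
        by_contra hjz
        exact (Set.disjoint_left.1 hd hzV1)
          ((ha2 j).2.1 (subset_closure (Function.mem_support.2 hjz)))
      have hzz : (∑ j : Fin n₂, |(F₂ j).1 z|) = 0 :=
        Finset.sum_eq_zero fun j _ => by rw [hz2 j, abs_zero]
      rw [hzz, add_zero]
      exact hb1 z

lemma normT_sep_add (hT : IsMetricFunctional T) (hTloc : MlocCond T) {s t : Set Z}
    (hst : Metric.AreSeparated s t) : normT T (s ∪ t) = normT T s + normT T t := by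
  rcases s.eq_empty_or_nonempty with rfl | hs
  · simp [normT_empty hT]
  rcases t.eq_empty_or_nonempty with rfl | ht
  · simp [normT_empty hT]
  obtain ⟨r0, hr0, hsep⟩ := hst
  set r : ℝ≥0∞ := min r0 1 with hr
  have hrpos : 0 < r := lt_min (pos_iff_ne_zero.2 hr0) zero_lt_one
  have hrtop : r ≠ ⊤ := ne_top_of_le_ne_top ENNReal.one_ne_top (min_le_right _ _)
  have hsep' : ∀ x ∈ s, ∀ y ∈ t, r ≤ edist x y := fun x hx y hy =>
    le_trans (min_le_left _ _) (hsep x hx y hy)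
  have hr2pos : 0 < r / 2 := ENNReal.div_pos hrpos.ne' ENNReal.ofNat_ne_top
  apply le_antisymm
  · -- subadditivity
    by_cases hfin : normT T s = ⊤ ∨ normT T t = ⊤
    · rcases hfin with h | h <;> rw [h] <;> simp
    push_neg at hfin
    apply ENNReal.le_of_forall_pos_le_add
    intro ε hε _
    have hε2 : (0:ℝ≥0∞) < ↑ε / 2 := ENNReal.div_pos (by exact_mod_cast hε.ne') ENNReal.ofNat_ne_top
    obtain ⟨Vs, hVso, hsVs, hVsm⟩ :=
      exists_isOpen_massIn_lt (ENNReal.lt_add_right hfin.1 hε2.ne')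
    obtain ⟨Vt, hVto, htVt, hVtm⟩ :=
      exists_isOpen_massIn_lt (ENNReal.lt_add_right hfin.2 hε2.ne')
    calc normT T (s ∪ t) ≤ massIn T (Vs ∪ Vt) :=
          normT_le_massIn T (hVso.union hVto) (Set.union_subset_union hsVs htVt)
      _ ≤ massIn T Vs + massIn T Vt := massIn_union_le hT hTloc hVso hVto
      _ ≤ (normT T s + ↑ε / 2) + (normT T t + ↑ε / 2) := add_le_add hVsm.le hVtm.le
      _ = normT T s + normT T t + (↑ε / 2 + ↑ε / 2) := by ring
      _ = normT T s + normT T t + ↑ε := by rw [ENNReal.add_halves]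
  · -- superadditivity
    refine le_iInf fun V => le_iInf fun hV => ?_
    set Vs : Set Z := V ∩ {z | Metric.infEDist z s < r / 2} with hVs
    set Vt : Set Z := V ∩ {z | Metric.infEDist z t < r / 2} with hVt
    have hVso : IsOpen Vs := hV.1.inter (isOpen_lt EMetric.continuous_infEdist continuous_const)
    have hVto : IsOpen Vt := hV.1.inter (isOpen_lt EMetric.continuous_infEdist continuous_const)
    have hsVs : s ⊆ Vs := fun z hz =>
      ⟨hV.2 (Or.inl hz), by rw [Set.mem_setOf_eq, EMetric.infEdist_zero_of_mem hz]; exact hr2pos⟩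
    have htVt : t ⊆ Vt := fun z hz =>
      ⟨hV.2 (Or.inr hz), by rw [Set.mem_setOf_eq, EMetric.infEdist_zero_of_mem hz]; exact hr2pos⟩
    have hdisj : Disjoint Vs Vt := by
      rw [Set.disjoint_left]
      rintro z ⟨-, hzs⟩ ⟨-, hzt⟩
      obtain ⟨x, hxs, hxz⟩ := EMetric.infEdist_lt_iff.1 hzs
      obtain ⟨y, hyt, hyz⟩ := EMetric.infEdist_lt_iff.1 hzt
      have hlt : edist x y < r := by
        calc edist x y ≤ edist x z + edist z y := edist_triangle _ _ _
          _ = edist z x + edist z y := by rw [edist_comm]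
          _ < r / 2 + r / 2 := ENNReal.add_lt_add hxz hyz
          _ = r := ENNReal.add_halves r
      exact absurd (hsep' x hxs y hyt) (not_le.2 hlt)
    calc normT T s + normT T t ≤ massIn T Vs + massIn T Vt :=
          add_le_add (normT_le_massIn T hVso hsVs) (normT_le_massIn T hVto htVt)
      _ ≤ massIn T V := massIn_add_le_of_disjoint T Set.inter_subset_left
          Set.inter_subset_left hdisj

end AuxLemmas3
section AuxLemmas4

open Set Function
open scoped NNReal

variable {Z : Type*} [MetricSpace Z] {m : ℕ}
variable {T : (Z → ℝ) → (Fin m → Z → ℝ) → ℝ}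

lemma T_smul_pow (hT : IsMetricFunctional T) (f : Z → ℝ) (hf : LipBS f) (c : ℝ)
    (g : Fin m → Z → ℝ) (hg : ∀ i, LipLoc (g i)) :
    T f (fun i => c • g i) = c ^ m * T f g := by
  classical
  have key : ∀ s : Finset (Fin m),
      T f (fun i => if i ∈ s then c • g i else g i) = c ^ s.card * T f g := by
    intro s
    induction s using Finset.induction_on with
    | empty => simp
    | @insert a s ha ih =>
        have hupdate : (fun i => if i ∈ insert a s then c • g i else g i)
            = Function.update (fun i => if i ∈ s then c • g i else g i) a (c • g a) := by
          funext i
          rcases eq_or_ne i a with rfl | hia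
          · simp [Function.update_self]
          · simp [Function.update_of_ne hia, Finset.mem_insert, hia]
        have hπ' : ∀ i, LipLoc (if i ∈ s then c • g i else g i) := by
          intro i
          by_cases his : i ∈ s
          · rw [if_pos his]; exact lipLoc_smul c (hg i)
          · rw [if_neg his]; exact hg i
        have h4 := hT.1.2.2.2 f (fun i => if i ∈ s then c • g i else g i) a c (g a)
          hf hπ' (hg a)
        have hupdate2 : Function.update (fun i => if i ∈ s then c • g i else g i) a (g a)
            = (fun i => if i ∈ s then c • g i else g i) := by
          funext i
          rcases eq_or_ne i a with rfl | hia
          · simp [Function.update_self, if_neg ha]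
          · simp [Function.update_of_ne hia]
        rw [hupdate, h4, hupdate2, ih, Finset.card_insert_of_notMem ha, pow_succ]
        ring
  have h := key Finset.univ
  simpa [Finset.card_univ] using h

lemma massIn_push_le {Z' : Type*} [MetricSpace Z']
    (T : (Z → ℝ) → (Fin m → Z → ℝ) → ℝ) (hT : IsMetricFunctional T)
    (φ : Z → Z') (L : ℝ≥0) (hφ : LipschitzWith L φ)
    (hprop : ∀ A : Set Z', IsBounded A → IsBounded (φ ⁻¹' A)) (W : Set Z') :
    massIn (fun (f : Z' → ℝ) (π : Fin m → Z' → ℝ) => T (f ∘ φ) (fun i => π i ∘ φ)) W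
      ≤ (L : ℝ≥0∞) ^ m * massIn T (φ ⁻¹' W) := by
  refine iSup_le fun p => ?_
  obtain ⟨⟨n, F⟩, hadm, hb⟩ := p
  have hcomp : ∀ j : Fin n, LipBS ((F j).1 ∘ φ) ∧ tsupport ((F j).1 ∘ φ) ⊆ φ ⁻¹' W := by
    intro j
    obtain ⟨⟨Kf, hKf⟩, hbf⟩ := (hadm j).1
    have hsupp : tsupport ((F j).1 ∘ φ) ⊆ φ ⁻¹' (tsupport (F j).1) := by
      refine closure_minimal ?_ (IsClosed.preimage hφ.continuous (isClosed_tsupport _))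
      rw [Function.support_comp_eq_preimage]
      exact Set.preimage_mono subset_closure
    exact ⟨⟨⟨Kf * L, hKf.comp hφ⟩, (hprop _ hbf).subset hsupp⟩,
      hsupp.trans (Set.preimage_mono (hadm j).2.1)⟩
  rcases eq_or_ne m 0 with hm | hm
  · subst hm
    have h := le_massIn T (V := φ ⁻¹' W)
      (fun j => ((F j).1 ∘ φ, fun i => (F j).2 i ∘ φ))
      (fun j => ⟨(hcomp j).1, (hcomp j).2, fun k => k.elim0⟩)
      (fun z => hb (φ z))
    simpa [pow_zero, one_mul] using h
  rcases eq_or_ne L 0 with hL | hL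
  · -- every value vanishes
    have hzero : ∀ j : Fin n, T ((F j).1 ∘ φ) (fun i => (F j).2 i ∘ φ) = 0 := by
      intro j
      have hπloc : ∀ i, LipLoc ((F j).2 i ∘ φ) := fun i =>
        lipLoc_of_lipschitzWith (((hadm j).2.2 i).comp hφ)
      cases isEmpty_or_nonempty Z with
      | inl h =>
          have h0 : (F j).1 ∘ φ = (0 : Z → ℝ) := funext fun z => (h.false z).elim
          rw [h0]
          exact T_zero hT hπloc
      | inr h =>
          apply hT.2.2 _ _ (hcomp j).1 hπloc
          refine ⟨⟨0, Nat.pos_of_ne_zero hm⟩, 1, one_pos, fun z w _ _ => ?_⟩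
          have hφc : φ z = φ w := by
            have hd := hφ.dist_le_mul z w
            rw [hL] at hd
            simp only [NNReal.coe_zero, zero_mul] at hd
            exact dist_le_zero.1 hd
          show ((F j).2 _ ∘ φ) z = ((F j).2 _ ∘ φ) w
          simp only [Function.comp_apply, hφc]
    simp only [hzero, Finset.sum_const_zero, ENNReal.ofReal_zero]
    exact zero_le
  · -- rescale
    set c : ℝ := (L : ℝ) with hc
    have hcpos : 0 < c := by
      rw [hc]
      exact_mod_cast pos_iff_ne_zero.2 hL
    have hπ1 : ∀ (j : Fin n) (i : Fin m),
        LipschitzWith 1 (fun z => c⁻¹ * ((F j).2 i (φ z))) := by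
      intro j i
      apply LipschitzWith.of_dist_le_mul
      intro x y
      have h1 := ((hadm j).2.2 i).dist_le_mul (φ x) (φ y)
      have h2 := hφ.dist_le_mul x y
      rw [Real.dist_eq, ← mul_sub, abs_mul, abs_of_nonneg (le_of_lt (inv_pos.2 hcpos))]
      rw [NNReal.coe_one, one_mul] at h1
      calc c⁻¹ * |(F j).2 i (φ x) - (F j).2 i (φ y)|
          ≤ c⁻¹ * dist (φ x) (φ y) := by
            rw [← Real.dist_eq]
            exact mul_le_mul_of_nonneg_left h1 (by positivity)
        _ ≤ c⁻¹ * (c * dist x y) := mul_le_mul_of_nonneg_left h2 (by positivity)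
        _ = 1 * dist x y := by field_simp
        _ = ↑(1:ℝ≥0) * dist x y := by norm_num
    have hval : ∀ j : Fin n, T ((F j).1 ∘ φ) (fun i => (F j).2 i ∘ φ)
        = c ^ m * T ((F j).1 ∘ φ) (fun i z => c⁻¹ * ((F j).2 i (φ z))) := by
      intro j
      have hkey := T_smul_pow hT ((F j).1 ∘ φ) (hcomp j).1 c
        (fun i z => c⁻¹ * ((F j).2 i (φ z)))
        (fun i => lipLoc_of_lipschitzWith (hπ1 j i))
      rw [← hkey]
      congr 1
      funext i
      funext z
      simp only [Pi.smul_apply, smul_eq_mul, Function.comp_apply]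
      field_simp
    have hsum : (∑ j : Fin n, T ((F j).1 ∘ φ) (fun i => (F j).2 i ∘ φ))
        = c ^ m * ∑ j : Fin n, T ((F j).1 ∘ φ) (fun i z => c⁻¹ * ((F j).2 i (φ z))) := by
      rw [Finset.mul_sum]
      exact Finset.sum_congr rfl fun j _ => hval j
    have hmass := le_massIn T (V := φ ⁻¹' W)
      (fun j => ((F j).1 ∘ φ, fun i z => c⁻¹ * ((F j).2 i (φ z))))
      (fun j => ⟨(hcomp j).1, (hcomp j).2, fun i => hπ1 j i⟩)
      (fun z => hb (φ z))
    calc ENNReal.ofReal (∑ j : Fin n, T ((F j).1 ∘ φ) (fun i => (F j).2 i ∘ φ))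
        = ENNReal.ofReal (c ^ m *
            ∑ j : Fin n, T ((F j).1 ∘ φ) (fun i z => c⁻¹ * ((F j).2 i (φ z)))) := by
          rw [hsum]
      _ = ENNReal.ofReal (c ^ m) * ENNReal.ofReal
            (∑ j : Fin n, T ((F j).1 ∘ φ) (fun i z => c⁻¹ * ((F j).2 i (φ z)))) :=
          ENNReal.ofReal_mul (by positivity)
      _ ≤ ENNReal.ofReal (c ^ m) * massIn T (φ ⁻¹' W) := mul_le_mul_right hmass _
      _ = (L : ℝ≥0∞) ^ m * massIn T (φ ⁻¹' W) := by
          rw [hc, ENNReal.ofReal_pow (by positivity), ENNReal.ofReal_coe_nnreal]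

lemma exists_isOpen_measure_le {Z' : Type*} [MetricSpace Z'] [MeasurableSpace Z']
    [BorelSpace Z'] (ν : Measure Z')
    (hfin : ∀ (x : Z') (R : ℝ), ν (Metric.ball x R) < ⊤)
    {B : Set Z'} (hB : MeasurableSet B) {ε : ℝ≥0∞} (hε : ε ≠ 0) :
    ∃ W, IsOpen W ∧ B ⊆ W ∧ ν W ≤ ν B + ε := by
  cases isEmpty_or_nonempty Z' with
  | inl h =>
      refine ⟨∅, isOpen_empty, fun z hz => (h.false z).elim, by simp⟩
  | inr h =>
      obtain ⟨x₀⟩ := h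
      obtain ⟨δ, hδpos, hδsum⟩ := ENNReal.exists_pos_sum_of_countable' hε ℕ
      set Bn : ℕ → Set Z' := fun n => B ∩ {z | dist z x₀ ∈ Set.Ico (n : ℝ) (n + 1)} with hBn
      have hdistm : Measurable fun z : Z' => dist z x₀ :=
        (continuous_id.dist continuous_const).measurable
      have hBnm : ∀ n, MeasurableSet (Bn n) := fun n =>
        hB.inter (hdistm measurableSet_Ico)
      have hBcover : B = ⋃ n, Bn n := by
        ext z
        constructor
        · intro hz
          exact Set.mem_iUnion.2 ⟨⌊dist z x₀⌋₊, hz,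
            Nat.floor_le dist_nonneg, Nat.lt_floor_add_one _⟩
        · intro hz
          obtain ⟨n, hzn⟩ := Set.mem_iUnion.1 hz
          exact hzn.1
      have hBdisj : Pairwise (Disjoint on Bn) := by
        intro a b hab
        rw [Function.onFun, Set.disjoint_left]
        rintro z ⟨-, hz1, hz2⟩ ⟨-, hz3, hz4⟩
        apply hab
        have h1 : a < b + 1 := by exact_mod_cast lt_of_le_of_lt hz1 hz4
        have h2 : b < a + 1 := by exact_mod_cast lt_of_le_of_lt hz3 hz2
        omega
      have key : ∀ n : ℕ, ∃ Wn, IsOpen Wn ∧ Bn n ⊆ Wn ∧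
          ν (Wn ∩ Metric.ball x₀ (n + 2)) ≤ ν (Bn n) + δ n := by
        intro n
        set μn := ν.restrict (Metric.ball x₀ (n + 2)) with hμn
        haveI : IsFiniteMeasure μn :=
          ⟨by rw [hμn, Measure.restrict_apply_univ]; exact hfin _ _⟩
        have hlt : μn (Bn n) < μn (Bn n) + δ n :=
          ENNReal.lt_add_right (measure_ne_top _ _) (hδpos n).ne'
        obtain ⟨Wn, hBnWn, hWno, hWn⟩ := Set.exists_isOpen_lt_of_lt (Bn n) _ hlt
        refine ⟨Wn, hWno, hBnWn, ?_⟩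
        have h1 : ν (Wn ∩ Metric.ball x₀ (n + 2)) = μn Wn := by
          rw [hμn, Measure.restrict_apply hWno.measurableSet]
        have h2 : μn (Bn n) = ν (Bn n) := by
          rw [hμn, Measure.restrict_apply (hBnm n)]
          congr 1
          refine Set.inter_eq_self_of_subset_left fun z hz => ?_
          have hzd : dist z x₀ < n + 1 := hz.2.2
          exact Metric.mem_ball.2 (by push_cast; linarith)
        rw [h1, ← h2]
        exact hWn.le
      choose Wn hWno hBnWn hWnle using key
      refine ⟨⋃ n, Wn n ∩ Metric.ball x₀ (n + 2),
        isOpen_iUnion fun n => (hWno n).inter Metric.isOpen_ball, ?_, ?_⟩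
      · intro z hz
        rw [hBcover] at hz
        obtain ⟨n, hzn⟩ := Set.mem_iUnion.1 hz
        refine Set.mem_iUnion.2 ⟨n, hBnWn n hzn, Metric.mem_ball.2 ?_⟩
        have hzd : dist z x₀ < n + 1 := hzn.2.2
        push_cast
        linarith
      · calc ν (⋃ n, Wn n ∩ Metric.ball x₀ (n + 2))
            ≤ ∑' n, ν (Wn n ∩ Metric.ball x₀ (n + 2)) := measure_iUnion_le _
          _ ≤ ∑' n, (ν (Bn n) + δ n) := ENNReal.tsum_le_tsum fun n => hWnle n
          _ = (∑' n, ν (Bn n)) + ∑' n, δ n := ENNReal.tsum_add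
          _ ≤ ν B + ε := by
              refine add_le_add ?_ hδsum.le
              rw [← measure_iUnion hBdisj hBnm, ← hBcover]

end AuxLemmas4
/-- for `T ∈ M_{m,loc}(Z)` and a Lipschitz map `φ : Z → Z'` with
bounded preimages of bounded sets, the push-forward satisfies
`‖φ_# T‖(B) ≤ Lip(φ)^m · ‖T‖(φ⁻¹(B))` for every Borel set `B ⊆ Z'`. -/
theorem pushforward_mass_bound {Z Z' : Type*} [MetricSpace Z] [MetricSpace Z']
    [MeasurableSpace Z'] [BorelSpace Z'] {m : ℕ}
    (T : (Z → ℝ) → (Fin m → Z → ℝ) → ℝ)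
    (hT : IsMetricFunctional T) (hTloc : MlocCond T)
    (φ : Z → Z') (L : NNReal) (hφ : LipschitzWith L φ)
    (hprop : ∀ A : Set Z', IsBounded A → IsBounded (φ ⁻¹' A)) :
    ∀ B : Set Z', MeasurableSet B →
      normT (fun (f : Z' → ℝ) (π : Fin m → Z' → ℝ) =>
          T (f ∘ φ) (fun i => π i ∘ φ)) B ≤
        (L : ℝ≥0∞) ^ m * normT T (φ ⁻¹' B) := by
  intro B hB
  by_cases hcase : L = 0 ∧ m ≠ 0
  · -- degenerate case : the push-forward has zero mass
    calc normT (fun (f : Z' → ℝ) (π : Fin m → Z' → ℝ) =>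
            T (f ∘ φ) (fun i => π i ∘ φ)) B
        ≤ massIn (fun (f : Z' → ℝ) (π : Fin m → Z' → ℝ) =>
            T (f ∘ φ) (fun i => π i ∘ φ)) Set.univ :=
          normT_le_massIn _ isOpen_univ (Set.subset_univ _)
      _ ≤ (L : ℝ≥0∞) ^ m * massIn T (φ ⁻¹' Set.univ) :=
          massIn_push_le T hT φ L hφ hprop _
      _ = 0 := by
          rw [hcase.1]
          simp [zero_pow hcase.2]
      _ ≤ _ := zero_le
  · -- non-degenerate case
    have hLm0 : ((L : ℝ≥0∞)) ^ m ≠ 0 := by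
      rcases not_and_or.1 hcase with hL | hm
      · exact pow_ne_zero m (by exact_mod_cast hL)
      · push_neg at hm
        rw [hm, pow_zero]
        exact one_ne_zero
    have hLmtop : ((L : ℝ≥0∞)) ^ m ≠ ⊤ := ENNReal.pow_ne_top ENNReal.coe_ne_top
    letI : MeasurableSpace Z := borel Z
    haveI : BorelSpace Z := ⟨rfl⟩
    set μ : MeasureTheory.OuterMeasure Z :=
      { measureOf := normT T
        empty := normT_empty hT
        mono := fun h => normT_mono T h
        iUnion_nat := fun A _ => normT_iUnion_le hT hTloc A } with hμ
    have hμapp : ∀ A : Set Z, μ A = normT T A := fun A => rfl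
    have hmetric : μ.IsMetric := fun s t hst => normT_sep_add hT hTloc hst
    have hcar : (borel Z : MeasurableSpace Z) ≤ μ.caratheodory :=
      hmetric.borel_le_caratheodory
    set μM : Measure Z := μ.toMeasure hcar with hμM
    have hφmeas : Measurable φ := hφ.continuous.measurable
    set ν : Measure Z' := μM.map φ with hν
    have hνapp : ∀ A : Set Z', MeasurableSet A → ν A = normT T (φ ⁻¹' A) := by
      intro A hA
      rw [hν, Measure.map_apply hφmeas hA, hμM,
        MeasureTheory.toMeasure_apply _ _ (hφmeas hA)]
      exact hμapp _
    have hνball : ∀ (x : Z') (R : ℝ), ν (Metric.ball x R) < ⊤ := by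
      intro x R
      rw [hνapp _ measurableSet_ball]
      have hAb : IsBounded (φ ⁻¹' Metric.ball x R) := hprop _ isBounded_ball
      obtain ⟨C, -, -, hfin, -⟩ := hTloc (Metric.thickening 1 (φ ⁻¹' Metric.ball x R))
        Metric.isOpen_thickening hAb.thickening 1 one_pos
      exact lt_of_le_of_lt (normT_le_massIn T Metric.isOpen_thickening
        (Metric.self_subset_thickening one_pos _)) hfin
    apply ENNReal.le_of_forall_pos_le_add
    intro ε hε hfin2
    have hBfin : normT T (φ ⁻¹' B) ≠ ⊤ := by
      intro htop
      rw [htop, ENNReal.mul_top hLm0] at hfin2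
      exact absurd hfin2 (lt_irrefl _)
    set ε' : ℝ≥0∞ := (ε : ℝ≥0∞) / (L : ℝ≥0∞) ^ m with hε'
    have hε'0 : ε' ≠ 0 := by
      rw [hε']
      intro h0
      rcases ENNReal.div_eq_zero_iff.1 h0 with h | h
      · exact (by exact_mod_cast hε.ne' : (ε : ℝ≥0∞) ≠ 0) h
      · exact hLmtop h
    obtain ⟨W, hWo, hBW, hWle⟩ := exists_isOpen_measure_le ν hνball hB hε'0
    have hφWopen : IsOpen (φ ⁻¹' W) := hWo.preimage hφ.continuous
    calc normT (fun (f : Z' → ℝ) (π : Fin m → Z' → ℝ) =>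
            T (f ∘ φ) (fun i => π i ∘ φ)) B
        ≤ massIn (fun (f : Z' → ℝ) (π : Fin m → Z' → ℝ) =>
            T (f ∘ φ) (fun i => π i ∘ φ)) W := normT_le_massIn _ hWo hBW
      _ ≤ (L : ℝ≥0∞) ^ m * massIn T (φ ⁻¹' W) := massIn_push_le T hT φ L hφ hprop W
      _ = (L : ℝ≥0∞) ^ m * normT T (φ ⁻¹' W) := by rw [normT_isOpen T hφWopen]
      _ = (L : ℝ≥0∞) ^ m * ν W := by rw [hνapp W hWo.measurableSet]
      _ ≤ (L : ℝ≥0∞) ^ m * (ν B + ε') := mul_le_mul_right hWle _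
      _ = (L : ℝ≥0∞) ^ m * (normT T (φ ⁻¹' B) + ε') := by rw [hνapp B hB]
      _ = (L : ℝ≥0∞) ^ m * normT T (φ ⁻¹' B) + (L : ℝ≥0∞) ^ m * ε' := mul_add _ _ _
      _ ≤ (L : ℝ≥0∞) ^ m * normT T (φ ⁻¹' B) + ↑ε := by
          refine add_le_add_right ?_ _
          rw [hε']
          exact ENNReal.mul_div_le
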